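/- Let d ≥ 1 and let v ∈ H^1(ℝ^d, dγ) with ∫ |v|^2 dγ = 1 and ∫ |x|^2 |v|^2 dγ ≤ d. If the improved inequality δ[v] ≥ φ(∫|v|^2 log|v|^2 dγ + d/2 − (1/2)∫|x|^2|v|^2 dγ) holds with φ(t) = (d/4)(e^{2t/d}−1−2t/d), then δ[v] ≥ (1/(2d))(∫|v|^2 log|v|^2 dγ)^2 + (1/(8d))(d − ∫|x|^2|v|^2 dγ)^2, where δ[v] = ∫|∇v|^2 dγ − (1/2)∫|v|^2 log|v|^2 dγ. -/

import Mathlib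

open MeasureTheory Real

lemma stmt_9_mul_log (u : ℝ) (hu : 0 ≤ u) : u - 1 ≤ u * Real.log u := by
  rcases eq_or_lt_of_le hu with h | h
  · simp [← h]
  · have h1 : Real.log u⁻¹ ≤ u⁻¹ - 1 := Real.log_le_sub_one_of_pos (by positivity)
    rw [Real.log_inv] at h1
    have h2 : u * (1 - u⁻¹) ≤ u * Real.log u :=
      mul_le_mul_of_nonneg_left (by linarith) hu
    have : u * (1 - u⁻¹) = u - 1 := by field_simp
    linarith

theorem stmt_9 (d : ℕ) (hd : 1 ≤ d)
    (g : EuclideanSpace ℝ (Fin d) → ℝ)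
    (hg : g = fun x => (2 * Real.pi) ^ (-(d : ℝ) / 2) * Real.exp (-‖x‖ ^ 2 / 2))
    (v : EuclideanSpace ℝ (Fin d) → ℝ) (hmeas : Measurable v)
    (h2 : Integrable (fun x => v x ^ 2 * g x))
    (hgrad : Integrable (fun x => ‖gradient v x‖ ^ 2 * g x))
    (hent : Integrable (fun x => v x ^ 2 * Real.log (v x ^ 2) * g x))
    (hmom : Integrable (fun x => ‖x‖ ^ 2 * v x ^ 2 * g x))
    (hnorm : ∫ x, v x ^ 2 * g x = 1)
    (hK : (∫ x, ‖x‖ ^ 2 * v x ^ 2 * g x) ≤ d)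
    (himp : (d / 4 : ℝ) *
        (Real.exp ((2 / d) * ((∫ x, v x ^ 2 * Real.log (v x ^ 2) * g x)
            + d / 2 - (1 / 2) * ∫ x, ‖x‖ ^ 2 * v x ^ 2 * g x))
          - 1 - (2 / d) * ((∫ x, v x ^ 2 * Real.log (v x ^ 2) * g x)
            + d / 2 - (1 / 2) * ∫ x, ‖x‖ ^ 2 * v x ^ 2 * g x))
      ≤ (∫ x, ‖gradient v x‖ ^ 2 * g x)
        - (1 / 2) * ∫ x, v x ^ 2 * Real.log (v x ^ 2) * g x) :
    (1 / (2 * d)) * (∫ x, v x ^ 2 * Real.log (v x ^ 2) * g x) ^ 2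
      + (1 / (8 * d)) * (d - ∫ x, ‖x‖ ^ 2 * v x ^ 2 * g x) ^ 2
    ≤ (∫ x, ‖gradient v x‖ ^ 2 * g x)
        - (1 / 2) * ∫ x, v x ^ 2 * Real.log (v x ^ 2) * g x := by
  -- Gaussian normalization
  have heq : ∀ x : EuclideanSpace ℝ (Fin d), g x
      = (2 * Real.pi) ^ (-(d : ℝ) / 2) * Real.exp (-(1/2) * ‖x‖^2) := by
    intro x; rw [hg]; ring_nf
  have hintc : Integrable (fun x : EuclideanSpace ℝ (Fin d) => Real.exp (-(1/2) * ‖x‖^2)) := by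
    have := (GaussianFourier.integrable_cexp_neg_mul_sq_norm_add_of_euclideanSpace
      (b := (1/2 : ℂ)) (by norm_num) 0 (0 : EuclideanSpace ℝ (Fin d))).norm
    apply this.congr
    filter_upwards with x
    rw [show (-(1/2:ℂ) * (‖x‖:ℂ) ^ 2 + 0 * ((inner ℝ 0 x : ℝ):ℂ)) = ((-(1/2) * ‖x‖^2 : ℝ) : ℂ) by
        push_cast; ring,
      Complex.norm_exp, Complex.ofReal_re]
  have hgint : Integrable g := by
    simp only [funext heq]; exact hintc.const_mul _
  have hfr : (Module.finrank ℝ (EuclideanSpace ℝ (Fin d)) : ℝ) = d := by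
    simp [finrank_euclideanSpace_fin]
  have hg1 : ∫ x, g x = 1 := by
    have hint : ∫ x : EuclideanSpace ℝ (Fin d), Real.exp (-(1/2) * ‖x‖^2)
        = (Real.pi / (1/2)) ^ ((Module.finrank ℝ (EuclideanSpace ℝ (Fin d))) / 2 : ℝ) :=
      GaussianFourier.integral_rexp_neg_mul_sq_norm (by norm_num)
    rw [funext heq, integral_const_mul, hint, hfr]
    rw [show Real.pi / (1/2) = 2 * Real.pi by ring, ← Real.rpow_add (by positivity),
      show (-(d:ℝ)/2 + (d:ℝ)/2) = 0 by ring, Real.rpow_zero]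
  have hgnn : ∀ x, 0 ≤ g x := by intro x; rw [hg]; positivity
  -- entropy nonneg
  set A := ∫ x, v x ^ 2 * Real.log (v x ^ 2) * g x with hA_def
  set K := ∫ x, ‖x‖ ^ 2 * v x ^ 2 * g x with hK_def
  have hA : 0 ≤ A := by
    have hmono : ∫ x, (v x ^ 2 * g x - g x) ≤ A := by
      apply integral_mono (h2.sub hgint) hent
      intro x
      have := stmt_9_mul_log (v x ^ 2) (sq_nonneg _)
      have := mul_le_mul_of_nonneg_right this (hgnn x)
      simp only [Pi.sub_apply]
      nlinarith
    rw [integral_sub h2 hgint, hnorm, hg1] at hmono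
    linarith
  have hD : (0:ℝ) < d := by exact_mod_cast hd
  have hB : 0 ≤ (d:ℝ) - K := by linarith
  -- φ(t) ≥ t²/(2d)
  set t : ℝ := A + d / 2 - (1/2) * K with ht_def
  have ht : 0 ≤ t := by rw [ht_def]; linarith
  have hs : 0 ≤ (2 / (d:ℝ)) * t := by positivity
  have hq := Real.quadratic_le_exp_of_nonneg hs
  have key : t ^ 2 / (2 * d) ≤ (∫ x, ‖gradient v x‖ ^ 2 * g x) - (1 / 2) * A := by
    have h1 : (d:ℝ) / 4 * (((2/(d:ℝ)) * t)^2 / 2) ≤ (d:ℝ) / 4 *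
        (Real.exp ((2/(d:ℝ)) * t) - 1 - (2/(d:ℝ)) * t) := by
      nlinarith
    have h2' : (d:ℝ) / 4 * (((2/(d:ℝ)) * t)^2 / 2) = t ^ 2 / (2 * d) := by
      field_simp; ring
    calc t ^ 2 / (2 * d) = (d:ℝ) / 4 * (((2/(d:ℝ)) * t)^2 / 2) := h2'.symm
      _ ≤ _ := le_trans h1 himp
  have hfin : (1 / (2 * (d:ℝ))) * A ^ 2 + (1 / (8 * (d:ℝ))) * ((d:ℝ) - K) ^ 2
      ≤ t ^ 2 / (2 * d) := by
    have hexp : t ^ 2 / (2 * d) - ((1 / (2 * (d:ℝ))) * A ^ 2 + (1 / (8 * (d:ℝ))) * ((d:ℝ) - K) ^ 2)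
        = A * ((d:ℝ) - K) / (2 * d) := by
      rw [ht_def]; field_simp; ring
    have : 0 ≤ A * ((d:ℝ) - K) / (2 * d) := by positivity
    linarith
  linarith
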